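/- Let G be an infinite, locally finite, connected simple graph and U : E → ℝ injective. For every finite nonempty set of vertices W with W ≠ V, the edge of the cut ∂_E W with minimal label belongs both to the free minimal spanning forest F_f(U) and to the wired minimal spanning forest F_w(U). -/
import Mathlib


open SimpleGraph

/-- The set of edges of `G` whose endpoints cannot be joined by a path all of whose
edges have strictly smaller label: the (free) minimal spanning forest / tree of `G`. -/
def mstEdges {V α : Type*} [LinearOrder α] (G : SimpleGraph V) (U : Sym2 V → α) :
    Set (Sym2 V) :=
  {e | e ∈ G.edgeSet ∧ ∀ a b : V, e = s(a, b) →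
    ∀ p : G.Walk a b, p.IsPath → ∃ f ∈ p.edges, U e ≤ U f}

/-- A one-sided infinite simple path in `G`. -/
def IsRay {V : Type*} (G : SimpleGraph V) (r : ℕ → V) : Prop :=
  Function.Injective r ∧ ∀ n : ℕ, G.Adj (r n) (r (n + 1))

/-- The edges of a one-sided infinite path. -/
def rayEdges {V : Type*} (r : ℕ → V) : Set (Sym2 V) :=
  Set.range fun n : ℕ => s(r n, r (n + 1))

/-- The wired minimal spanning forest of `G`: edges such that every extended path
(finite simple path, or pair of disjoint rays from the two endpoints) joining the
endpoints contains an edge of label at least as large. -/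
def wmsfEdges {V : Type*} (G : SimpleGraph V) (U : Sym2 V → ℝ) : Set (Sym2 V) :=
  {e | e ∈ G.edgeSet ∧ ∀ a b : V, e = s(a, b) →
    (∀ p : G.Walk a b, p.IsPath → ∃ f ∈ p.edges, U e ≤ U f) ∧
    (∀ r₁ r₂ : ℕ → V, IsRay G r₁ → IsRay G r₂ → r₁ 0 = a → r₂ 0 = b →
      (∀ m n : ℕ, r₁ m ≠ r₂ n) →
      ∃ f ∈ rayEdges r₁ ∪ rayEdges r₂, U e ≤ U f)}

/-- The edges of `G` joining `W` to its complement. -/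
def cutEdges {V : Type*} (G : SimpleGraph V) (W : Set V) : Set (Sym2 V) :=
  {e | e ∈ G.edgeSet ∧ ∃ a b : V, e = s(a, b) ∧ a ∈ W ∧ b ∉ W}

/-- A bi-infinite simple path in `G`. -/
def IsBiRay {V : Type*} (G : SimpleGraph V) (r : ℤ → V) : Prop :=
  Function.Injective r ∧ ∀ n : ℤ, G.Adj (r n) (r (n + 1))

/-- The edges of a bi-infinite simple path. -/
def biRayEdges {V : Type*} (r : ℤ → V) : Set (Sym2 V) :=
  Set.range fun n : ℤ => s(r n, r (n + 1))


lemma walk_cross {V : Type*} (G : SimpleGraph V) (W : Set V) :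
    ∀ {a b : V} (p : G.Walk a b), a ∈ W → b ∉ W → ∃ f ∈ p.edges, f ∈ cutEdges G W := by
  intro a b p
  induction p with
  | nil => intro ha hb; exact absurd ha hb
  | @cons a c b h p ih =>
    intro ha hb
    by_cases hc : c ∈ W
    · obtain ⟨f, hf, hf'⟩ := ih hc hb
      exact ⟨f, by simp [SimpleGraph.Walk.edges_cons, hf], hf'⟩
    · exact ⟨s(a, c), by simp [SimpleGraph.Walk.edges_cons],
        ⟨G.mem_edgeSet.mpr h, a, c, rfl, ha, hc⟩⟩

lemma ray_cross {V : Type*} (G : SimpleGraph V) (W : Set V) (hWfin : W.Finite)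
    (r : ℕ → V) (hr : IsRay G r) (h0 : r 0 ∈ W) :
    ∃ f ∈ rayEdges r, f ∈ cutEdges G W := by
  classical
  have hex : ∃ n, r n ∉ W := by
    by_contra h
    push_neg at h
    have hfin : (Set.univ : Set ℕ).Finite := by
      refine ((hWfin.preimage hr.1.injOn).subset ?_)
      intro n _; exact h n
    exact Set.infinite_univ hfin
  set n := Nat.find hex with hn
  have hspec : r n ∉ W := Nat.find_spec hex
  have hnpos : 0 < n := by
    rcases Nat.eq_zero_or_pos n with h | h
    · exact absurd (h ▸ h0) (h ▸ hspec)
    · exact h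
  have hm : r (n - 1) ∈ W := by
    by_contra hc
    exact Nat.find_min hex (Nat.sub_lt hnpos one_pos) hc
  have hs : n - 1 + 1 = n := Nat.succ_pred_eq_of_pos hnpos
  refine ⟨s(r (n - 1), r (n - 1 + 1)), ⟨n - 1, rfl⟩,
    G.mem_edgeSet.mpr (hr.2 (n - 1)), r (n - 1), r (n - 1 + 1), rfl, hm, ?_⟩
  rw [hs]; exact hspec

/-- In an infinite, locally finite, connected graph with injective edge
labels, the least edge of any cut determined by a finite nonempty proper vertex set
belongs to both the free and the wired minimal spanning forest. -/
theorem stmt2 {V : Type*} [Infinite V] (G : SimpleGraph V)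
    (hlf : ∀ v : V, (G.neighborSet v).Finite) (hG : G.Connected)
    (U : Sym2 V → ℝ) (hU : Set.InjOn U G.edgeSet)
    (W : Set V) (hWfin : W.Finite) (hWne : W.Nonempty) (hWV : W ≠ Set.univ)
    (e : Sym2 V) (he : e ∈ cutEdges G W) (hmin : ∀ f ∈ cutEdges G W, U e ≤ U f) :
    e ∈ mstEdges G U ∧ e ∈ wmsfEdges G U := by
  obtain ⟨heE, a0, b0, heq0, ha0, hb0⟩ := he
  have key : ∀ a b : V, e = s(a, b) →
      ∀ p : G.Walk a b, ∃ f ∈ p.edges, U e ≤ U f := by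
    intro a b hab p
    have hcase : (a = a0 ∧ b = b0) ∨ (a = b0 ∧ b = a0) := by
      have := hab ▸ heq0
      rwa [Sym2.eq_iff] at this
    rcases hcase with ⟨rfl, rfl⟩ | ⟨rfl, rfl⟩
    · obtain ⟨f, hf, hf'⟩ := walk_cross G W p ha0 hb0
      exact ⟨f, hf, hmin f hf'⟩
    · obtain ⟨f, hf, hf'⟩ := walk_cross G W p.reverse ha0 hb0
      rw [SimpleGraph.Walk.edges_reverse, List.mem_reverse] at hf
      exact ⟨f, hf, hmin f hf'⟩
  have keyray : ∀ a b : V, e = s(a, b) →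
      ∀ r₁ r₂ : ℕ → V, IsRay G r₁ → IsRay G r₂ → r₁ 0 = a → r₂ 0 = b →
      ∃ f ∈ rayEdges r₁ ∪ rayEdges r₂, U e ≤ U f := by
    intro a b hab r₁ r₂ hr₁ hr₂ h1 h2
    have hcase : (a = a0 ∧ b = b0) ∨ (a = b0 ∧ b = a0) := by
      have := hab ▸ heq0
      rwa [Sym2.eq_iff] at this
    rcases hcase with ⟨rfl, rfl⟩ | ⟨rfl, rfl⟩
    · obtain ⟨f, hf, hf'⟩ := ray_cross G W hWfin r₁ hr₁ (h1 ▸ ha0)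
      exact ⟨f, Or.inl hf, hmin f hf'⟩
    · obtain ⟨f, hf, hf'⟩ := ray_cross G W hWfin r₂ hr₂ (h2 ▸ ha0)
      exact ⟨f, Or.inr hf, hmin f hf'⟩
  refine ⟨⟨heE, fun a b hab p _ => key a b hab p⟩,
    ⟨heE, fun a b hab => ⟨fun p _ => key a b hab p,
      fun r₁ r₂ hr₁ hr₂ h1 h2 _ => keyray a b hab r₁ r₂ hr₁ hr₂ h1 h2⟩⟩⟩
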